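/- Let ζ and ζ_1, …, ζ_n be independent N(0, σ² I_d) random vectors in ℝ^d with σ² > 0, let β > 0, and let h_1, …, h_n be positive integers. Then E[exp(−β Σ_{j=1}^n h_j ‖ζ − ζ_j‖²)] = (σ²)^{−d/2} (1/σ² + Σ_{j=1}^n 2βh_j/(2βh_jσ² + 1))^{−d/2} ∏_{j=1}^n (2βh_jσ² + 1)^{−d/2}. -/

import Mathlib

open MeasureTheory ProbabilityTheory Real

noncomputable section

/-- Density of the centered isotropic Gaussian `N(0, σ² I_d)` on `ℝ^d`. -/
def gaussPdf (d : ℕ) (σ2 : ℝ) (x : EuclideanSpace ℝ (Fin d)) : ℝ :=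
  (2 * Real.pi * σ2) ^ (-(d : ℝ) / 2) * Real.exp (-‖x‖ ^ 2 / (2 * σ2))

/-- The centered isotropic Gaussian measure `N(0, σ² I_d)` on `ℝ^d`. -/
def gaussMeasure (d : ℕ) (σ2 : ℝ) : Measure (EuclideanSpace ℝ (Fin d)) :=
  volume.withDensity fun x => ENNReal.ofReal (gaussPdf d σ2 x)

end


lemma rpow_neg_half_eq (t : ℝ) (ht : 0 < t) : t ^ (-(1:ℝ) / 2) = (√t)⁻¹ := by
  rw [Real.sqrt_eq_rpow, ← Real.rpow_neg ht.le]
  norm_num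

lemma gauss1d (σ2 : ℝ) (hσ2 : 0 < σ2) (a c : ℝ) (ha : 0 ≤ a) :
    ∫ x : ℝ, Real.exp (-(a * (x - c) ^ 2)) *
        ((2 * π * σ2) ^ (-(1:ℝ) / 2) * Real.exp (-x ^ 2 / (2 * σ2)))
      = (2 * a * σ2 + 1) ^ (-(1:ℝ) / 2) *
        Real.exp (-(a * c ^ 2) / (2 * a * σ2 + 1)) := by
  have hπ := Real.pi_pos
  set p : ℝ := a + 1 / (2 * σ2) with hp
  have hp0 : 0 < p := by positivity
  have hcden : (0:ℝ) < 2 * a * σ2 + 1 := by positivity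
  have h2σp : 2 * σ2 * p = 2 * a * σ2 + 1 := by rw [hp]; field_simp
  set dd : ℝ := a * c / p with hdd
  set C : ℝ := (2 * π * σ2) ^ (-(1:ℝ) / 2) with hC
  have key : ∀ x : ℝ, Real.exp (-(a * (x - c) ^ 2)) *
      (C * Real.exp (-x ^ 2 / (2 * σ2)))
      = C * Real.exp (-(a * c ^ 2) / (2 * a * σ2 + 1)) *
        Real.exp (-(p * (x - dd) ^ 2)) := by
    intro x
    have e1 : Real.exp (-(a * (x - c) ^ 2)) * (C * Real.exp (-x ^ 2 / (2 * σ2)))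
        = C * Real.exp (-(a * (x - c) ^ 2) + -x ^ 2 / (2 * σ2)) := by
      rw [Real.exp_add]; ring
    have e2 : C * Real.exp (-(a * c ^ 2) / (2 * a * σ2 + 1)) *
        Real.exp (-(p * (x - dd) ^ 2))
        = C * Real.exp (-(a * c ^ 2) / (2 * a * σ2 + 1) + -(p * (x - dd) ^ 2)) := by
      rw [Real.exp_add]; ring
    rw [e1, e2]
    congr 1
    rw [← h2σp, hdd, hp]
    congr 1
    field_simp
    ring
  simp only [key]
  rw [integral_const_mul, integral_sub_right_eq_self (μ := volume)
    (fun x => Real.exp (-(p * x ^ 2))) dd]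
  rw [show (fun x : ℝ => Real.exp (-(p * x ^ 2))) = fun x : ℝ => Real.exp (-p * x ^ 2) by
    funext x; rw [neg_mul], integral_gaussian p]
  rw [mul_right_comm]
  congr 1
  rw [hC, rpow_neg_half_eq _ (by positivity), rpow_neg_half_eq _ hcden,
    ← Real.sqrt_inv, ← Real.sqrt_mul (by positivity), ← Real.sqrt_inv, ← h2σp]
  congr 1
  field_simp



lemma rpow_half_pow (t : ℝ) (ht : 0 ≤ t) (d : ℕ) :
    (t ^ (-(1:ℝ)/2)) ^ d = t ^ (-(d:ℝ)/2) := by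
  rw [← Real.rpow_natCast (t ^ (-(1:ℝ)/2)) d, ← Real.rpow_mul ht,
    show (-(1:ℝ)/2 * (d:ℕ) : ℝ) = -(d:ℝ)/2 by push_cast; ring]

lemma norm_sq_eq (d : ℕ) (v : EuclideanSpace ℝ (Fin d)) : ‖v‖ ^ 2 = ∑ i, v i ^ 2 := by
  rw [EuclideanSpace.norm_eq, Real.sq_sqrt (by positivity)]
  simp [sq_abs]

lemma gaussPdf_cont (d : ℕ) (σ2 : ℝ) : Continuous (gaussPdf d σ2) := by
  unfold gaussPdf
  fun_prop

lemma gaussPdf_nonneg (d : ℕ) (σ2 : ℝ) (hσ2 : 0 < σ2) (x : EuclideanSpace ℝ (Fin d)) :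
    0 ≤ gaussPdf d σ2 x := by
  unfold gaussPdf; positivity

lemma gaussD (d : ℕ) (σ2 : ℝ) (hσ2 : 0 < σ2) (a : ℝ) (ha : 0 ≤ a)
    (w : EuclideanSpace ℝ (Fin d)) :
    ∫ x, Real.exp (-(a * ‖x - w‖ ^ 2)) ∂(gaussMeasure d σ2)
      = (2 * a * σ2 + 1) ^ (-(d:ℝ) / 2) *
        Real.exp (-(a * ‖w‖ ^ 2) / (2 * a * σ2 + 1)) := by
  have hπ := Real.pi_pos
  have hcden : (0:ℝ) < 2 * a * σ2 + 1 := by positivity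
  rw [gaussMeasure]
  have hmeas : Measurable (fun x => (gaussPdf d σ2 x).toNNReal) :=
    (gaussPdf_cont d σ2).measurable.real_toNNReal
  have hdens : (fun x => ENNReal.ofReal (gaussPdf d σ2 x))
      = fun x => ((gaussPdf d σ2 x).toNNReal : ENNReal) := rfl
  rw [hdens, integral_withDensity_eq_integral_smul hmeas]
  have hsm : ∀ x, ((gaussPdf d σ2 x).toNNReal : ℝ) • Real.exp (-(a * ‖x - w‖ ^ 2))
      = Real.exp (-(a * ‖x - w‖ ^ 2)) * gaussPdf d σ2 x := by
    intro x
    rw [smul_eq_mul, Real.coe_toNNReal _ (gaussPdf_nonneg d σ2 hσ2 x), mul_comm]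
  simp only [NNReal.smul_def, hsm]
  have mp := (EuclideanSpace.volume_preserving_symm_measurableEquiv_toLp (Fin d)).symm
  rw [← mp.integral_comp (MeasurableEquiv.measurableEmbedding _)]
  have key : ∀ y : Fin d → ℝ,
      Real.exp (-(a * ‖(MeasurableEquiv.toLp 2 (Fin d → ℝ)) y - w‖ ^ 2)) *
        gaussPdf d σ2 ((MeasurableEquiv.toLp 2 (Fin d → ℝ)) y)
      = ∏ i, (Real.exp (-(a * (y i - w i) ^ 2)) *
          ((2 * π * σ2) ^ (-(1:ℝ) / 2) * Real.exp (-(y i) ^ 2 / (2 * σ2)))) := by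
    intro y
    have hcoord : ∀ i, ((MeasurableEquiv.toLp 2 (Fin d → ℝ)) y) i = y i := fun i => rfl
    have h1 : ‖(MeasurableEquiv.toLp 2 (Fin d → ℝ)) y - w‖ ^ 2
        = ∑ i, (y i - w i) ^ 2 := by
      rw [norm_sq_eq]
      congr 1
    have h2 : ‖(MeasurableEquiv.toLp 2 (Fin d → ℝ)) y‖ ^ 2 = ∑ i, (y i) ^ 2 := by
      rw [norm_sq_eq]; rfl
    rw [Finset.prod_mul_distrib, Finset.prod_mul_distrib, Finset.prod_const,
      ← Real.exp_sum, ← Real.exp_sum]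
    unfold gaussPdf
    rw [h1, h2]
    have hconst : ((2 * π * σ2) ^ (-(1:ℝ) / 2)) ^ (Fintype.card (Fin d))
        = (2 * π * σ2) ^ (-(d:ℝ) / 2) := by
      rw [Fintype.card_fin, rpow_half_pow _ (by positivity)]
    rw [Finset.card_univ, hconst]
    simp only [Finset.mul_sum, Finset.sum_div, ← Finset.sum_neg_distrib]
  simp only [Function.comp_def, MeasurableEquiv.symm_symm, key]
  rw [volume_pi]
  rw [integral_fintype_prod_eq_prod (ι := Fin d) (fun i (t : ℝ) =>
    Real.exp (-(a * (t - w i) ^ 2)) * ((2 * π * σ2) ^ (-(1:ℝ) / 2) * Real.exp (-t ^ 2 / (2 * σ2))))]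
  rw [Finset.prod_congr rfl (fun i _ => gauss1d σ2 hσ2 a (w i) ha)]
  rw [Finset.prod_mul_distrib, Finset.prod_const, Finset.card_univ, ← Real.exp_sum]
  rw [Fintype.card_fin, rpow_half_pow _ (by positivity), norm_sq_eq]
  congr 1
  simp only [Finset.mul_sum, Finset.sum_div, ← Finset.sum_neg_distrib]


lemma integral_pi_prod {α : Type*} [MeasurableSpace α] (μ : Measure α) [SigmaFinite μ] :
    ∀ {n : ℕ} (f : Fin n → α → ℝ),
    ∫ x : Fin n → α, ∏ i, f i (x i) ∂(Measure.pi fun _ => μ) = ∏ i, ∫ x, f i x ∂μ := by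
  intro n
  induction n with
  | zero =>
      intro f
      simp [Measure.pi_empty_univ, Measure.real]
  | succ n ih =>
      intro f
      rw [← ((measurePreserving_piFinSuccAbove (fun _ : Fin (n+1) => μ) 0).symm).integral_comp']
      simp_rw [MeasurableEquiv.piFinSuccAbove_symm_apply, Fin.insertNthEquiv,
        Fin.prod_univ_succ, Fin.insertNth_zero]
      simp only [Fin.zero_succAbove, cast_eq, Function.comp_def, Fin.cons_zero, Fin.cons_succ,
        Equiv.coe_fn_mk]
      rw [integral_prod_mul (f := f 0) (g := fun y : Fin n → α => ∏ i, f i.succ (y i)),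
        ih (fun i => f i.succ)]


lemma gauss_prob (d : ℕ) (σ2 : ℝ) (hσ2 : 0 < σ2) :
    IsProbabilityMeasure (gaussMeasure d σ2) := by
  constructor
  have h := gaussD d σ2 hσ2 0 le_rfl 0
  norm_num at h
  have h1 : (gaussMeasure d σ2 Set.univ).toReal = 1 := by
    simpa [integral_const, smul_eq_mul, Measure.real] using h
  have hfin : gaussMeasure d σ2 Set.univ ≠ ⊤ := by
    intro hh; rw [hh] at h1; simp at h1
  rw [← ENNReal.ofReal_toReal hfin, h1]
  norm_num

set_option maxHeartbeats 1000000 in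
/-- If `ζ, ζ_1, …, ζ_n` are independent `N(0, σ² I_d)` random vectors in
`ℝ^d` with `σ² > 0`, `β > 0`, and `h_1, …, h_n` are positive integers, then
`E[exp(-β Σ_j h_j ‖ζ - ζ_j‖²)]
  = (σ²)^{-d/2} (1/σ² + Σ_j 2βh_j/(2βh_jσ² + 1))^{-d/2} Π_j (2βh_jσ² + 1)^{-d/2}`.
Here `ζ = g 0` and `ζ_j = g j.succ`. -/
theorem statement7 {Ω : Type} [MeasurableSpace Ω] (P : Measure Ω) [IsProbabilityMeasure P]
    (d n : ℕ) (σ2 β : ℝ) (hσ2 : 0 < σ2) (hβ : 0 < β)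
    (g : Fin (n + 1) → Ω → EuclideanSpace ℝ (Fin d))
    (hind : iIndepFun g P)
    (hlaw : ∀ j, P.map (g j) = gaussMeasure d σ2)
    (h : Fin n → ℕ) (hpos : ∀ j, 0 < h j) :
    ∫ ω, Real.exp (-β * ∑ j, (h j : ℝ) * ‖g 0 ω - g j.succ ω‖ ^ 2) ∂P =
      σ2 ^ (-(d : ℝ) / 2) *
        (1 / σ2 + ∑ j, 2 * β * (h j : ℝ) / (2 * β * (h j : ℝ) * σ2 + 1)) ^ (-(d : ℝ) / 2) *
        ∏ j, (2 * β * (h j : ℝ) * σ2 + 1) ^ (-(d : ℝ) / 2) := by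
  haveI hprob : IsProbabilityMeasure (gaussMeasure d σ2) := gauss_prob d σ2 hσ2
  -- each g j is a.e.-measurable
  have haem : ∀ j, AEMeasurable (g j) P := by
    intro j
    by_contra hc
    have : P.map (g j) = 0 := Measure.map_of_not_aemeasurable hc
    rw [hlaw j] at this
    exact (IsProbabilityMeasure.ne_zero _) this
  have htup : AEMeasurable (fun ω (i : Fin (n+1)) => g i ω) P := by
    refine ⟨fun ω i => (haem i).mk _ ω,
      measurable_pi_lambda _ (fun i => (haem i).measurable_mk), ?_⟩
    filter_upwards [ae_all_iff.2 (fun i => (haem i).ae_eq_mk)] with ω hω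
    funext i; exact hω i
  -- joint law is the product measure
  have hjoint : P.map (fun ω (i : Fin (n+1)) => g i ω)
      = Measure.pi (fun _ : Fin (n+1) => gaussMeasure d σ2) := by
    symm
    apply Measure.pi_eq
    intro s hs
    rw [Measure.map_apply_of_aemeasurable htup (MeasurableSet.univ_pi hs)]
    have hpre : (fun ω (i : Fin (n+1)) => g i ω) ⁻¹' Set.univ.pi s
        = ⋂ i, g i ⁻¹' s i := by
      ext ω; simp [Set.mem_univ_pi]
    rw [hpre, hind.meas_iInter (fun i => ⟨s i, hs i, rfl⟩)]
    exact Finset.prod_congr rfl fun i _ => by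
      rw [← hlaw i, Measure.map_apply_of_aemeasurable (haem i) (hs i)]
  -- the function on the product space
  set F : (Fin (n+1) → EuclideanSpace ℝ (Fin d)) → ℝ :=
    fun x => Real.exp (-β * ∑ j, (h j : ℝ) * ‖x 0 - x j.succ‖ ^ 2) with hF
  have hFmeas : Measurable F := by
    apply Measurable.exp
    apply Measurable.const_mul
    apply Finset.measurable_sum
    intro j _
    apply Measurable.const_mul
    exact ((measurable_pi_apply 0).sub (measurable_pi_apply j.succ)).norm.pow_const 2
  have step1 : ∫ ω, Real.exp (-β * ∑ j, (h j : ℝ) * ‖g 0 ω - g j.succ ω‖ ^ 2) ∂P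
      = ∫ x, F x ∂(Measure.pi (fun _ : Fin (n+1) => gaussMeasure d σ2)) := by
    rw [← hjoint, integral_map htup hFmeas.aestronglyMeasurable]
  rw [step1]
  -- split off coordinate 0
  rw [← ((measurePreserving_piFinSuccAbove
      (fun _ : Fin (n+1) => gaussMeasure d σ2) 0).symm).integral_comp']
  set G : EuclideanSpace ℝ (Fin d) × (Fin n → EuclideanSpace ℝ (Fin d)) → ℝ :=
    fun z => Real.exp (-β * ∑ j, (h j : ℝ) * ‖z.1 - z.2 j‖ ^ 2) with hG
  have hcomp : (fun z : EuclideanSpace ℝ (Fin d) × (Fin n → EuclideanSpace ℝ (Fin d)) =>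
      F ((MeasurableEquiv.piFinSuccAbove (fun _ : Fin (n+1) => EuclideanSpace ℝ (Fin d)) 0).symm z))
      = G := by
    funext z
    simp only [hF, hG, MeasurableEquiv.piFinSuccAbove_symm_apply, Fin.insertNthEquiv,
      Fin.insertNth_zero, Equiv.coe_fn_mk, Fin.cons_zero, Fin.cons_succ,
      Fin.zero_succAbove, cast_eq]
  rw [hcomp]
  have hGmeas : Measurable G := by
    apply Measurable.exp
    apply Measurable.const_mul
    apply Finset.measurable_sum
    intro j _
    have hj : Measurable (fun z : EuclideanSpace ℝ (Fin d) × (Fin n → EuclideanSpace ℝ (Fin d)) =>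
        z.2 j) :=
      (measurable_pi_apply j : Measurable fun y : Fin n → EuclideanSpace ℝ (Fin d) => y j).comp
      measurable_snd
    exact ((measurable_fst.sub hj).norm.pow_const 2).const_mul _
  have hGbd : ∀ z, ‖G z‖ ≤ 1 := by
    intro z
    rw [hG, Real.norm_eq_abs, Real.abs_exp]
    rw [Real.exp_le_one_iff, neg_mul]
    apply neg_nonpos_of_nonneg
    apply mul_nonneg hβ.le
    exact Finset.sum_nonneg fun j _ => by positivity
  haveI hprod : IsProbabilityMeasure ((gaussMeasure d σ2).prod
      (Measure.pi fun _ : Fin n => gaussMeasure d σ2)) := by infer_instance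
  have hGint : Integrable G ((gaussMeasure d σ2).prod
      (Measure.pi fun _ : Fin n => gaussMeasure d σ2)) :=
    (integrable_const 1).mono' hGmeas.aestronglyMeasurable (ae_of_all _ hGbd)
  rw [MeasureTheory.integral_prod _ hGint]
  have inner : ∀ x0 : EuclideanSpace ℝ (Fin d),
      ∫ y : Fin n → EuclideanSpace ℝ (Fin d), G (x0, y)
        ∂(Measure.pi fun _ : Fin n => gaussMeasure d σ2)
      = (∏ j, (2 * β * (h j : ℝ) * σ2 + 1) ^ (-(d:ℝ)/2)) *
        Real.exp (-((∑ j, β * (h j : ℝ) / (2 * β * (h j : ℝ) * σ2 + 1)) * ‖x0‖ ^ 2)) := by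
    intro x0
    have hGy : ∀ y : Fin n → EuclideanSpace ℝ (Fin d),
        G (x0, y) = ∏ j, Real.exp (-((β * (h j : ℝ)) * ‖y j - x0‖ ^ 2)) := by
      intro y
      simp only [hG, ← Real.exp_sum]
      rw [Real.exp_eq_exp]
      rw [neg_mul, Finset.mul_sum, ← Finset.sum_neg_distrib]
      refine Finset.sum_congr rfl fun j _ => ?_
      rw [norm_sub_rev]
      ring
    simp_rw [hGy]
    rw [integral_pi_prod (gaussMeasure d σ2)
      (fun j t => Real.exp (-((β * (h j : ℝ)) * ‖t - x0‖ ^ 2)))]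
    rw [Finset.prod_congr rfl
      (fun j _ => gaussD d σ2 hσ2 (β * (h j : ℝ)) (by positivity) x0)]
    rw [Finset.prod_mul_distrib, ← Real.exp_sum]
    congr 1
    · refine Finset.prod_congr rfl fun j _ => ?_
      congr 2
      ring
    · congr 1
      rw [Finset.sum_mul, ← Finset.sum_neg_distrib]
      refine Finset.sum_congr rfl fun j _ => ?_
      rw [show 2 * (β * (h j : ℝ)) * σ2 + 1 = 2 * β * (h j : ℝ) * σ2 + 1 by ring]
      field_simp
  simp_rw [inner]
  rw [integral_const_mul]
  set A : ℝ := ∑ j, β * (h j : ℝ) / (2 * β * (h j : ℝ) * σ2 + 1) with hA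
  have hA0 : 0 ≤ A := Finset.sum_nonneg fun j _ => by positivity
  have houter : ∫ x0, Real.exp (-(A * ‖x0‖ ^ 2)) ∂(gaussMeasure d σ2)
      = (2 * A * σ2 + 1) ^ (-(d:ℝ)/2) := by
    have := gaussD d σ2 hσ2 A hA0 0
    simp only [sub_zero, norm_zero] at this
    rw [this]
    norm_num
  rw [houter]
  -- final algebra
  have hsum0 : (0:ℝ) ≤ 1 / σ2 + ∑ j, 2 * β * (h j : ℝ) / (2 * β * (h j : ℝ) * σ2 + 1) := by
    have : (0:ℝ) ≤ ∑ j, 2 * β * (h j : ℝ) / (2 * β * (h j : ℝ) * σ2 + 1) :=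
      Finset.sum_nonneg fun j _ => by positivity
    positivity
  rw [mul_comm]
  congr 1
  rw [← Real.mul_rpow hσ2.le hsum0]
  congr 1
  have expand : 2 * A * σ2 + 1
      = 1 + ∑ j, 2 * (β * (h j : ℝ) / (2 * β * (h j : ℝ) * σ2 + 1)) * σ2 := by
    rw [hA, Finset.mul_sum, Finset.sum_mul]; ring
  rw [expand, mul_add, mul_one_div, div_self hσ2.ne', Finset.mul_sum]
  congr 1
  refine Finset.sum_congr rfl fun j _ => ?_
  ring
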